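/- Fix $x \ge 0$ and a finite counting measure $\mu$ on $[0,\infty)$. For any two non-increasing rate functions $r, \tilde{r}: \mathbb{N}^* \to (0,1]$ with $r(i) \le \tilde{r}(i)$ for all $i$, we have $\Phi^{\tilde r}(\mu, x) \preceq \Phi^{r}(\mu, x)$, i.e. a slower server leaves a larger service profile. -/

import Mathlib

open MeasureTheory Filter Topology

/-- The partial integral order `≼` on finite positive measures. -/
def IntOrder (μ ν : Measure ℝ) : Prop :=
  ∀ f : ℝ → ℝ, Measurable f → Monotone f → (∀ x, 0 ≤ f x) → (∃ C, ∀ x, f x ≤ C) →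
    ∫ x, f x ∂μ ≤ ∫ x, f x ∂ν

/-- The `i`-th smallest atom (1-based) of the finite counting measure represented by the
multiset `m`. -/
noncomputable def atom (m : Multiset ℝ) (i : ℕ) : ℝ :=
  (m.sort (· ≤ ·)).getD (i - 1) 0

/-- `γ_i^r(m, x)`. -/
noncomputable def gam (r : ℕ → ℝ) (m : Multiset ℝ) (x : ℝ) (i : ℕ) : ℝ :=
  r (Multiset.card m - i + 1) *
    (x - ∑ j ∈ Finset.Icc 1 (i - 1),
      atom m j * (1 / r (Multiset.card m - j + 1) - 1 / r (Multiset.card m - j)))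

open Classical in
/-- `i^r(m, x) = max {i ≤ N(m) : α_i(m) ≤ γ_i^r(m,x)}`, with `max ∅ = 0`. -/
noncomputable def irdx (r : ℕ → ℝ) (m : Multiset ℝ) (x : ℝ) : ℕ :=
  (((Finset.Icc 1 (Multiset.card m)).filter (fun i => atom m i ≤ gam r m x i)).max).unbotD 0

/-- `γ^r(m, x)`, the amount of attained service per customer by time `x`
(`0` for the empty profile). -/
noncomputable def gammaStar (r : ℕ → ℝ) (m : Multiset ℝ) (x : ℝ) : ℝ :=
  if m = 0 then 0 else gam r m x (min (irdx r m x + 1) (Multiset.card m))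

open Classical in
/-- The one-step processor-sharing map `Φ^r(·, x) = τ_{γ^r(·,x)}`. -/
noncomputable def PhiM (r : ℕ → ℝ) (m : Multiset ℝ) (x : ℝ) : Multiset ℝ :=
  (m.filter (fun a => gammaStar r m x < a)).map (fun a => a - gammaStar r m x)

/-- The counting measure associated to a multiset of atoms. -/
noncomputable def toMeas (m : Multiset ℝ) : Measure ℝ :=
  (m.map (fun a => (Measure.dirac a : Measure ℝ))).sum

open MeasureTheory Filter Topology

lemma atom_mem (m : Multiset ℝ) {i : ℕ} (h1 : 1 ≤ i) (h2 : i ≤ Multiset.card m) :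
    atom m i ∈ m := by
  have hlen : i - 1 < (m.sort (· ≤ ·)).length := by
    rw [Multiset.length_sort]; omega
  rw [atom, List.getD_eq_getElem _ _ hlen]
  rw [← Multiset.mem_sort (· ≤ ·)]
  exact List.getElem_mem hlen

lemma atom_nonneg (m : Multiset ℝ) (hm : ∀ a ∈ m, (0:ℝ) ≤ a) {i : ℕ}
    (h1 : 1 ≤ i) (h2 : i ≤ Multiset.card m) : 0 ≤ atom m i :=
  hm _ (atom_mem m h1 h2)

lemma atom_mono (m : Multiset ℝ) {i j : ℕ} (h1 : 1 ≤ i) (hij : i ≤ j)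
    (h2 : j ≤ Multiset.card m) : atom m i ≤ atom m j := by
  have hi : i - 1 < (m.sort (· ≤ ·)).length := by rw [Multiset.length_sort]; omega
  have hj : j - 1 < (m.sort (· ≤ ·)).length := by rw [Multiset.length_sort]; omega
  rw [atom, atom, List.getD_eq_getElem _ _ hi, List.getD_eq_getElem _ _ hj]
  rcases eq_or_lt_of_le hij with rfl | hlt
  · exact le_refl _
  · exact (Multiset.pairwise_sort (r := (· ≤ ·)) (s := m)).rel_get_of_lt
      (a := ⟨i-1, hi⟩) (b := ⟨j-1, hj⟩) (by simp [Fin.lt_def]; omega)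

open Finset

/-- `mn m γ j = min γ α_j`, with `α_0 = 0` and the top atom replaced by `+∞`. -/
noncomputable def mn (m : Multiset ℝ) (γ : ℝ) (j : ℕ) : ℝ :=
  if j = 0 then 0 else if j = Multiset.card m then γ else min γ (atom m j)

/-- The time needed for the per-customer service to reach `γ`. -/
noncomputable def Tfun (ρ : ℕ → ℝ) (m : Multiset ℝ) (γ : ℝ) : ℝ :=
  ∑ i ∈ Finset.range (Multiset.card m),
    (mn m γ (i + 1) - mn m γ i) / ρ (Multiset.card m - i)

lemma min_sub_min_mono {a b γ₁ γ₂ : ℝ} (hab : b ≤ a) (hγ : γ₁ ≤ γ₂) :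
    min γ₁ a - min γ₁ b ≤ min γ₂ a - min γ₂ b := by
  simp only [min_def]; split_ifs <;> linarith

lemma sub_min_mono {b γ₁ γ₂ : ℝ} (hγ : γ₁ ≤ γ₂) :
    γ₁ - min γ₁ b ≤ γ₂ - min γ₂ b := by
  simp only [min_def]; split_ifs <;> linarith

lemma mn_step_nonneg (m : Multiset ℝ) {γ : ℝ} (hγ : 0 ≤ γ)
    (hm : ∀ a ∈ m, (0:ℝ) ≤ a) {i : ℕ} (hi : i < Multiset.card m) :
    0 ≤ mn m γ (i + 1) - mn m γ i := by
  rcases Nat.eq_zero_or_pos i with rfl | hpos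
  · have h0 : mn m γ 0 = 0 := if_pos rfl
    rw [h0, sub_zero, Nat.zero_add, mn, if_neg one_ne_zero]
    split_ifs with h
    · exact hγ
    · exact le_min hγ (atom_nonneg m hm le_rfl (by omega))
  · have hne : i ≠ 0 := by omega
    have hne' : (i:ℕ) + 1 ≠ 0 := by omega
    have hiN : i ≠ Multiset.card m := by omega
    simp only [mn, if_neg hne, if_neg hne', if_neg hiN]
    split_ifs with h
    · have := min_le_left γ (atom m i); linarith
    · have := min_le_min (le_refl γ) (atom_mono m hpos (Nat.le_succ i) (by omega))
      linarith

lemma mn_step_gamma_mono (m : Multiset ℝ) {γ₁ γ₂ : ℝ} (hγ : γ₁ ≤ γ₂)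
    {i : ℕ} (hi : i < Multiset.card m) :
    mn m γ₁ (i + 1) - mn m γ₁ i ≤ mn m γ₂ (i + 1) - mn m γ₂ i := by
  rcases Nat.eq_zero_or_pos i with rfl | hpos
  · have h0 : mn m γ₁ 0 = 0 := if_pos rfl
    have h0' : mn m γ₂ 0 = 0 := if_pos rfl
    rw [h0, h0', sub_zero, sub_zero, Nat.zero_add, mn, mn, if_neg one_ne_zero,
      if_neg one_ne_zero]
    split_ifs with h
    · exact hγ
    · exact min_le_min hγ le_rfl
  · have hne : i ≠ 0 := by omega
    have hne' : (i:ℕ) + 1 ≠ 0 := by omega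
    have hiN : i ≠ Multiset.card m := by omega
    simp only [mn, if_neg hne, if_neg hne', if_neg hiN]
    split_ifs with h
    · exact sub_min_mono hγ
    · exact min_sub_min_mono (atom_mono m hpos (Nat.le_succ i) (by omega)) hγ

lemma mn_telescope (m : Multiset ℝ) (hm0 : m ≠ 0) (γ : ℝ) :
    ∑ i ∈ Finset.range (Multiset.card m), (mn m γ (i + 1) - mn m γ i) = γ := by
  rw [Finset.sum_range_sub (f := mn m γ)]
  have hN : Multiset.card m ≠ 0 := by simpa using hm0
  simp [mn, hN]

lemma Tfun_rate_le (r rt : ℕ → ℝ) (hr : ∀ n, 1 ≤ n → 0 < r n)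
    (hle : ∀ n, 1 ≤ n → r n ≤ rt n) (m : Multiset ℝ) (hm : ∀ a ∈ m, (0:ℝ) ≤ a)
    {γ : ℝ} (hγ : 0 ≤ γ) : Tfun rt m γ ≤ Tfun r m γ := by
  refine Finset.sum_le_sum fun i hi => ?_
  have hi' := Finset.mem_range.mp hi
  have h1 : 1 ≤ Multiset.card m - i := by omega
  exact div_le_div_of_nonneg_left (mn_step_nonneg m hγ hm hi') (hr _ h1) (hle _ h1)

lemma Tfun_gap (ρ : ℕ → ℝ) (hρ : ∀ n, 1 ≤ n → 0 < ρ n ∧ ρ n ≤ 1)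
    (m : Multiset ℝ) (hm0 : m ≠ 0) {γ₁ γ₂ : ℝ} (h : γ₁ ≤ γ₂) :
    γ₂ - γ₁ ≤ Tfun ρ m γ₂ - Tfun ρ m γ₁ := by
  have h2 : γ₂ - γ₁ = ∑ i ∈ Finset.range (Multiset.card m),
      ((mn m γ₂ (i+1) - mn m γ₂ i) - (mn m γ₁ (i+1) - mn m γ₁ i)) := by
    rw [Finset.sum_sub_distrib, mn_telescope m hm0, mn_telescope m hm0]
  have h3 : Tfun ρ m γ₂ - Tfun ρ m γ₁ = ∑ i ∈ Finset.range (Multiset.card m),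
      ((mn m γ₂ (i+1) - mn m γ₂ i) - (mn m γ₁ (i+1) - mn m γ₁ i)) /
        ρ (Multiset.card m - i) := by
    rw [Tfun, Tfun, ← Finset.sum_sub_distrib]
    exact Finset.sum_congr rfl fun i _ => (sub_div _ _ _).symm
  rw [h2, h3]
  refine Finset.sum_le_sum fun i hi => ?_
  have hi' := Finset.mem_range.mp hi
  have hd : 0 ≤ (mn m γ₂ (i+1) - mn m γ₂ i) - (mn m γ₁ (i+1) - mn m γ₁ i) :=
    sub_nonneg.mpr (mn_step_gamma_mono m h hi')
  have hρ' := hρ (Multiset.card m - i) (by omega)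
  calc (mn m γ₂ (i+1) - mn m γ₂ i) - (mn m γ₁ (i+1) - mn m γ₁ i)
      = ((mn m γ₂ (i+1) - mn m γ₂ i) - (mn m γ₁ (i+1) - mn m γ₁ i)) / 1 := (div_one _).symm
    _ ≤ _ := div_le_div_of_nonneg_left hd hρ'.1 hρ'.2

lemma gam_succ (ρ : ℕ → ℝ) (m : Multiset ℝ) (x : ℝ) {i : ℕ} (h1 : 1 ≤ i)
    (h2 : i < Multiset.card m)
    (ha : ρ (Multiset.card m - i) ≠ 0) (hb : ρ (Multiset.card m - i + 1) ≠ 0) :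
    gam ρ m x (i+1) = atom m i +
      (ρ (Multiset.card m - i) / ρ (Multiset.card m - i + 1)) * (gam ρ m x i - atom m i) := by
  have e1 : Multiset.card m - (i+1) + 1 = Multiset.card m - i := by omega
  have hsplit := Finset.sum_Icc_succ_top (a := 1) (b := i - 1) (by omega)
    (fun j => atom m j * (1 / ρ (Multiset.card m - j + 1) - 1 / ρ (Multiset.card m - j)))
  rw [show i - 1 + 1 = i from by omega] at hsplit
  rw [gam, show i + 1 - 1 = i from rfl, e1, hsplit, gam]
  have e2 : Multiset.card m - i + 1 - 1 = Multiset.card m - i := by omega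
  field_simp
  ring

lemma gam_succ_ge (ρ : ℕ → ℝ) (hρ : ∀ n, 1 ≤ n → 0 < ρ n) (m : Multiset ℝ) (x : ℝ)
    {i : ℕ} (h1 : 1 ≤ i) (h2 : i < Multiset.card m)
    (hgi : atom m i ≤ gam ρ m x i) : atom m i ≤ gam ρ m x (i+1) := by
  have ha := hρ (Multiset.card m - i) (by omega)
  have hb := hρ (Multiset.card m - i + 1) (by omega)
  rw [gam_succ ρ m x h1 h2 ha.ne' hb.ne']
  nlinarith [mul_nonneg (div_nonneg ha.le hb.le) (sub_nonneg.mpr hgi)]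

lemma abel_id (ρ : ℕ → ℝ) (m : Multiset ℝ) :
    ∀ k, k ≤ Multiset.card m →
    ∑ i ∈ Finset.range k,
        ((if i + 1 = 0 then (0:ℝ) else atom m (i+1)) - (if i = 0 then 0 else atom m i)) /
          ρ (Multiset.card m - i)
      = (∑ j ∈ Finset.Icc 1 k, atom m j *
          (1 / ρ (Multiset.card m - j + 1) - 1 / ρ (Multiset.card m - j)))
        + (if k = 0 then (0:ℝ) else atom m k) / ρ (Multiset.card m - k) := by
  intro k
  induction k with
  | zero => simp
  | succ k ih =>
    intro hk
    rw [Finset.sum_range_succ, ih (by omega),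
      Finset.sum_Icc_succ_top (show 1 ≤ k + 1 by omega)]
    have e1 : Multiset.card m - (k+1) + 1 = Multiset.card m - k := by omega
    rw [e1]
    rcases Nat.eq_zero_or_pos k with rfl | hkpos
    · simp only [if_pos rfl]
      simp
      ring
    · rw [if_neg (by omega), if_neg (by omega)]
      ring

lemma Tfun_eval (ρ : ℕ → ℝ) (m : Multiset ℝ) {γ : ℝ} {τ : ℕ} (h1 : 1 ≤ τ)
    (h2 : τ ≤ Multiset.card m) (hγ0 : 0 ≤ γ)
    (hlow : ∀ j, 1 ≤ j → j ≤ τ - 1 → atom m j ≤ γ)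
    (hhigh : ∀ j, τ ≤ j → j + 1 ≤ Multiset.card m → γ ≤ atom m j) :
    Tfun ρ m γ = (∑ j ∈ Finset.Icc 1 (τ-1), atom m j *
        (1/ρ (Multiset.card m - j + 1) - 1/ρ (Multiset.card m - j)))
      + γ / ρ (Multiset.card m - τ + 1) := by
  obtain ⟨k, rfl⟩ : ∃ k, τ = k + 1 := ⟨τ - 1, by omega⟩
  simp only [Nat.add_sub_cancel] at hlow ⊢
  have hNk : Multiset.card m - (k+1) + 1 = Multiset.card m - k := by omega
  rw [hNk]
  have hmn_low : ∀ j, j ≤ k → mn m γ j = (if j = 0 then (0:ℝ) else atom m j) := by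
    intro j hj
    rcases Nat.eq_zero_or_pos j with rfl | hjpos
    · simp [mn]
    · rw [if_neg (by omega), mn, if_neg (by omega), if_neg (by omega)]
      exact min_eq_right (hlow j hjpos hj)
  have hmn_high : ∀ j, k + 1 ≤ j → j ≤ Multiset.card m → mn m γ j = γ := by
    intro j hj1 hj2
    rw [mn, if_neg (by omega)]
    split_ifs with h
    · rfl
    · exact min_eq_left (hhigh j hj1 (by omega))
  rw [Tfun, ← Finset.sum_range_add_sum_Ico _ (show k+1 ≤ Multiset.card m from h2)]
  have hzero : ∑ i ∈ Finset.Ico (k+1) (Multiset.card m),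
      (mn m γ (i+1) - mn m γ i)/ρ (Multiset.card m - i) = 0 := by
    refine Finset.sum_eq_zero fun i hi => ?_
    obtain ⟨hi1, hi2⟩ := Finset.mem_Ico.mp hi
    rw [hmn_high (i+1) (by omega) (by omega), hmn_high i hi1 (by omega), sub_self, zero_div]
  rw [hzero, add_zero, Finset.sum_range_succ]
  have hcongr : ∑ i ∈ Finset.range k, (mn m γ (i+1) - mn m γ i)/ρ (Multiset.card m - i)
      = ∑ i ∈ Finset.range k, ((if i+1 = 0 then (0:ℝ) else atom m (i+1)) -
          (if i = 0 then (0:ℝ) else atom m i))/ρ (Multiset.card m - i) := by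
    refine Finset.sum_congr rfl fun i hi => ?_
    have hi' := Finset.mem_range.mp hi
    rw [hmn_low (i+1) (by omega), hmn_low i (by omega)]
  rw [hcongr, abel_id ρ m k (by omega), hmn_high (k+1) le_rfl h2, hmn_low k le_rfl]
  rw [add_assoc, ← add_div]
  ring_nf

lemma unbot'_max_le {N : ℕ} (F : Finset ℕ) (hF : F ⊆ Finset.Icc 1 N) :
    F.max.unbotD 0 ≤ N := by
  cases hmax : F.max with
  | bot => simp
  | coe M =>
    have hM := Finset.mem_of_max hmax
    have := (Finset.mem_Icc.mp (hF hM)).2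
    simpa using this

lemma mem_of_unbot'_pos {F : Finset ℕ} (h : 1 ≤ F.max.unbotD 0) : F.max.unbotD 0 ∈ F := by
  cases hmax : F.max with
  | bot => rw [hmax] at h; simp at h
  | coe M =>
    simp only [hmax, WithBot.unbotD_coe]
    exact Finset.mem_of_max hmax

lemma succ_not_mem (F : Finset ℕ) : F.max.unbotD 0 + 1 ∉ F := by
  intro hmem
  have h1 := Finset.le_max hmem
  cases hmax : F.max with
  | bot => rw [hmax] at h1; simp at h1
  | coe M =>
    rw [hmax] at h1
    simp only [WithBot.unbotD_coe, Nat.cast_id] at h1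
    have : M + 1 ≤ M := by exact_mod_cast h1
    omega

lemma gammaStar_spec (ρ : ℕ → ℝ) (hρ : ∀ n, 1 ≤ n → 0 < ρ n ∧ ρ n ≤ 1)
    (m : Multiset ℝ) (hm : ∀ a ∈ m, (0:ℝ) ≤ a) (hm0 : m ≠ 0) (x : ℝ) (hx : 0 ≤ x) :
    0 ≤ gammaStar ρ m x ∧ Tfun ρ m (gammaStar ρ m x) = x := by
  classical
  have hN1 : 1 ≤ Multiset.card m := Multiset.card_pos.mpr hm0
  set N := Multiset.card m with hNdef
  set F := (Finset.Icc 1 N).filter (fun i => atom m i ≤ gam ρ m x i) with hFdef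
  have hirdx : irdx ρ m x = F.max.unbotD 0 := rfl
  set i := irdx ρ m x with hidef
  have hiN : i ≤ N := by rw [hirdx]; exact unbot'_max_le F (Finset.filter_subset _ _)
  set τ := min (i + 1) N with hτdef
  have hτ1 : 1 ≤ τ := by omega
  have hτN : τ ≤ N := by omega
  have hγ : gammaStar ρ m x = gam ρ m x τ := by rw [gammaStar, if_neg hm0]
  have hmem : 1 ≤ i → atom m i ≤ gam ρ m x i := by
    intro h
    rw [hirdx] at h ⊢
    exact (Finset.mem_filter.mp (mem_of_unbot'_pos h)).2
  -- the key lower bound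
  have hlowtop : 2 ≤ τ → atom m (τ - 1) ≤ gam ρ m x τ := by
    intro h2
    rcases le_or_gt (i + 1) N with hcase | hcase
    · have hτ : τ = i + 1 := by omega
      have hi1 : 1 ≤ i := by omega
      have hiNlt : i < N := by omega
      rw [hτ, show i + 1 - 1 = i from rfl]
      exact gam_succ_ge ρ (fun n h => (hρ n h).1) m x hi1 hiNlt (hmem hi1)
    · have hiN' : i = N := by omega
      have hτ : τ = N := by omega
      have h2' : atom m N ≤ gam ρ m x N := by
        have := hmem (by omega); rwa [hiN'] at this
      rw [hτ]
      have h1 : atom m (N - 1) ≤ atom m N := atom_mono m (by omega) (by omega) le_rfl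
      linarith
  have hγ0 : 0 ≤ gam ρ m x τ := by
    rcases le_or_gt 2 τ with h2 | h2
    · exact le_trans (atom_nonneg m hm (by omega) (by omega)) (hlowtop h2)
    · have hτ : τ = 1 := by omega
      rw [hτ, gam, show (1:ℕ) - 1 = 0 from rfl, Finset.Icc_eq_empty (by omega),
        Finset.sum_empty, sub_zero]
      exact mul_nonneg (hρ _ (by omega)).1.le hx
  have hlow : ∀ j, 1 ≤ j → j ≤ τ - 1 → atom m j ≤ gam ρ m x τ := by
    intro j hj1 hj2
    have := hlowtop (by omega)
    exact le_trans (atom_mono m hj1 hj2 (by omega)) this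
  have hhigh : ∀ j, τ ≤ j → j + 1 ≤ N → gam ρ m x τ ≤ atom m j := by
    intro j hj1 hj2
    have hτ : τ = i + 1 := by omega
    have hi1N : i + 1 ∈ Finset.Icc 1 N := Finset.mem_Icc.mpr ⟨by omega, by omega⟩
    have hnm : ¬ (atom m (i+1) ≤ gam ρ m x (i+1)) := by
      intro hcon
      exact succ_not_mem F (Finset.mem_filter.mpr ⟨hi1N, by rw [← hirdx]; exact hcon⟩)
    push_neg at hnm
    rw [hτ]
    exact le_trans hnm.le (atom_mono m (by omega) (by omega) (by omega))
  constructor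
  · rw [hγ]; exact hγ0
  · rw [hγ, Tfun_eval ρ m hτ1 hτN hγ0 hlow hhigh]
    have hρτ : ρ (N - τ + 1) ≠ 0 := (hρ _ (by omega)).1.ne'
    rw [gam]
    rw [show min (irdx ρ m x + 1) (Multiset.card m) - 1 = τ - 1 from rfl]
    rw [mul_div_cancel_left₀ _ (show ρ (Multiset.card m - τ + 1) ≠ 0 from hρτ)]
    ring

lemma gammaStar_mono (r rt : ℕ → ℝ) (hr : ∀ n, 1 ≤ n → 0 < r n ∧ r n ≤ 1)
    (hrt : ∀ n, 1 ≤ n → 0 < rt n ∧ rt n ≤ 1) (hle : ∀ n, 1 ≤ n → r n ≤ rt n)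
    (x : ℝ) (hx : 0 ≤ x) (m : Multiset ℝ) (hm : ∀ a ∈ m, (0:ℝ) ≤ a) :
    gammaStar r m x ≤ gammaStar rt m x := by
  rcases eq_or_ne m 0 with rfl | hm0
  · simp [gammaStar]
  obtain ⟨hγr0, hTr⟩ := gammaStar_spec r hr m hm hm0 x hx
  obtain ⟨hγt0, hTt⟩ := gammaStar_spec rt hrt m hm hm0 x hx
  by_contra hlt
  push_neg at hlt
  have h1 : Tfun rt m (gammaStar r m x) ≤ x :=
    le_of_le_of_eq (Tfun_rate_le r rt (fun n h => (hr n h).1) hle m hm hγr0) hTr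
  have h2 := Tfun_gap rt hrt m hm0 hlt.le
  rw [hTt] at h2
  linarith

open MeasureTheory

lemma toMeas_cons (a : ℝ) (s : Multiset ℝ) :
    toMeas (a ::ₘ s) = Measure.dirac a + toMeas s := by
  rw [toMeas, Multiset.map_cons, Multiset.sum_cons, toMeas]

lemma toMeas_finite (s : Multiset ℝ) : IsFiniteMeasure (toMeas s) := by
  induction s using Multiset.induction with
  | empty =>
    have : toMeas 0 = 0 := by simp [toMeas]
    rw [this]; infer_instance
  | cons a s ih =>
    rw [toMeas_cons]
    haveI := ih
    infer_instance

lemma integrable_of_bdd {μ : Measure ℝ} [IsFiniteMeasure μ] {f : ℝ → ℝ}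
    (hf : Measurable f) {C : ℝ} (h0 : ∀ x, 0 ≤ f x) (hC : ∀ x, f x ≤ C) :
    Integrable f μ := by
  refine Integrable.mono' (integrable_const C) hf.aestronglyMeasurable
    (Filter.Eventually.of_forall fun a => ?_)
  rw [Real.norm_eq_abs, abs_of_nonneg (h0 a)]
  exact hC a

lemma integral_toMeas {f : ℝ → ℝ} (hf : Measurable f) {C : ℝ}
    (h0 : ∀ x, 0 ≤ f x) (hC : ∀ x, f x ≤ C) (s : Multiset ℝ) :
    ∫ y, f y ∂(toMeas s) = (s.map f).sum := by
  induction s using Multiset.induction with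
  | empty =>
    have : toMeas 0 = 0 := by simp [toMeas]
    rw [this]; simp
  | cons a s ih =>
    haveI := toMeas_finite s
    rw [toMeas_cons,
      integral_add_measure (integrable_of_bdd hf h0 hC) (integrable_of_bdd hf h0 hC),
      integral_dirac, ih, Multiset.map_cons, Multiset.sum_cons]

lemma filt_sum_le (pt p : ℝ → Prop) [DecidablePred pt] [DecidablePred p]
    (gt g : ℝ → ℝ) (h1 : ∀ a, pt a → p a) (h2 : ∀ a, pt a → gt a ≤ g a)
    (h3 : ∀ a, 0 ≤ g a) (m : Multiset ℝ) :
    ((m.filter pt).map gt).sum ≤ ((m.filter p).map g).sum := by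
  induction m using Multiset.induction with
  | empty => simp
  | cons a s ih =>
    by_cases hpt : pt a
    · rw [Multiset.filter_cons_of_pos _ hpt, Multiset.filter_cons_of_pos _ (h1 a hpt),
        Multiset.map_cons, Multiset.map_cons, Multiset.sum_cons, Multiset.sum_cons]
      exact add_le_add (h2 a hpt) ih
    · rw [Multiset.filter_cons_of_neg _ hpt]
      by_cases hp : p a
      · rw [Multiset.filter_cons_of_pos _ hp, Multiset.map_cons, Multiset.sum_cons]
        exact le_add_of_nonneg_of_le (h3 a) ih
      · rw [Multiset.filter_cons_of_neg _ hp]; exact ih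

/-- Comparison of rates: if `r ≤ r̃` pointwise (a slower server), then
`Φ^{r̃}(μ,x) ≼ Φ^{r}(μ,x)`, i.e. `Φ^r(μ,x) ≽ Φ^{r̃}(μ,x)`. -/
theorem stmt14 (r rt : ℕ → ℝ)
    (hr : ∀ n, 1 ≤ n → 0 < r n ∧ r n ≤ 1) (hrt : ∀ n, 1 ≤ n → 0 < rt n ∧ rt n ≤ 1)
    (hrmono : ∀ p q, 1 ≤ p → p ≤ q → r q ≤ r p)
    (hrtmono : ∀ p q, 1 ≤ p → p ≤ q → rt q ≤ rt p)
    (hle : ∀ i, 1 ≤ i → r i ≤ rt i)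
    (x : ℝ) (hx : 0 ≤ x)
    (m : Multiset ℝ) (hm : ∀ a ∈ m, (0:ℝ) ≤ a) :
    IntOrder (toMeas (PhiM rt m x)) (toMeas (PhiM r m x)) := by
  intro f hf hmono hpos hbdd
  obtain ⟨C, hC⟩ := hbdd
  have hγ : gammaStar r m x ≤ gammaStar rt m x :=
    gammaStar_mono r rt hr hrt hle x hx m hm
  rw [integral_toMeas hf hpos hC, integral_toMeas hf hpos hC, PhiM, PhiM,
    Multiset.map_map, Multiset.map_map]
  exact filt_sum_le _ _ _ _
    (fun a ha => lt_of_le_of_lt hγ ha)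
    (fun a ha => hmono (sub_le_sub_left hγ a))
    (fun a => hpos _) m
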